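/- Let d, D be positive integers, let (a_n)_{n∈ℕ} be nonnegative reals with ∑_{n=0}^∞ a_n < ∞, and for t = 1, …, D let φ_t be independent copies of the random Maclaurin feature φ(x) = √(a_N · 2^{N+1}) · ∏_{j=1}^N ⟨ω_j, x⟩ (each copy with its own independent N with P[N = n] = 2^{−(n+1)} and its own i.i.d. Rademacher vectors ω_j uniform on {−1,1}^d). Define Φ(x) = D^{−1/2}(φ_1(x), …, φ_D(x)) ∈ ℝ^D. Then for all x, y ∈ ℝ^d with ‖x‖₂ ≤ 1 and ‖y‖₂ ≤ 1, E[Φ(x) · Φ(y)] = ∑_{n=0}^∞ a_n ⟨x, y⟩^n, i.e., the inner product of the D-dimensional random feature maps is an unbiased estimator of the dot-product kernel K(x·y) = ∑ a_n (x·y)^n. -/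

import Mathlib

open MeasureTheory ProbabilityTheory

/-- The sign vector in `ℝ^d` associated to a Boolean vector. -/
noncomputable def signVec (d : ℕ) (b : Fin d → Bool) : EuclideanSpace ℝ (Fin d) :=
  WithLp.toLp 2 (fun i => if b i then (1 : ℝ) else -1)

/-- The uniform distribution on `{-1, 1}^d ⊆ ℝ^d` (a Rademacher random vector). -/
noncomputable def rademacherMeasure (d : ℕ) : Measure (EuclideanSpace ℝ (Fin d)) :=
  Measure.map (signVec d) (PMF.uniformOfFintype (Fin d → Bool)).toMeasure

lemma measurable_signVec (d : ℕ) : Measurable (signVec d) := by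
  have : Measurable (fun (b : Fin d → Bool) (i : Fin d) => if b i then (1:ℝ) else -1) :=
    measurable_pi_lambda _ (fun i => (measurable_of_countable (fun c : Bool => if c then (1:ℝ) else -1)).comp' (measurable_pi_apply i))
  exact (WithLp.measurable_toLp 2 _).comp this

instance rad_prob (d : ℕ) : IsProbabilityMeasure (rademacherMeasure d) := by
  unfold rademacherMeasure
  exact Measure.isProbabilityMeasure_map (measurable_signVec d).aemeasurable

lemma sign_pair_sum {d : ℕ} (i i' : Fin d) :
    ∑ b : Fin d → Bool, ((if b i then (1:ℝ) else -1) * (if b i' then (1:ℝ) else -1))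
      = if i = i' then (2:ℝ)^d else 0 := by
  rcases eq_or_ne i i' with rfl | hne
  · simp only [if_pos rfl]
    have : ∀ b : Fin d → Bool, ((if b i then (1:ℝ) else -1) * (if b i then (1:ℝ) else -1)) = 1 := by
      intro b; by_cases h : b i <;> simp [h]
    rw [Finset.sum_congr rfl (fun b _ => this b), Finset.sum_const]
    simp [Fintype.card_fun]
  · rw [if_neg hne]
    apply Finset.sum_involution (fun b _ => Function.update b i (!b i))
    · intro b _
      have h1 : Function.update b i (!b i) i = !b i := Function.update_self _ _ _
      have h2 : Function.update b i (!b i) i' = b i' := Function.update_of_ne (Ne.symm hne) _ _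
      rw [h1, h2]
      by_cases h : b i <;> by_cases h' : b i' <;> simp [h, h'] <;> ring
    · intro b _ _
      intro hc
      have := congrFun hc i
      rw [Function.update_self] at this
      exact Bool.not_ne_self (b i) this
    · intro b _
      funext j
      rcases eq_or_ne j i with rfl | hj
      · simp [Function.update_self]
      · simp [Function.update_of_ne hj]
    · intro b _; exact Finset.mem_univ _

lemma rad_inner_integral {d : ℕ} (x y : EuclideanSpace ℝ (Fin d)) :
    ∫ v, (inner ℝ v x : ℝ) * (inner ℝ v y : ℝ) ∂(rademacherMeasure d) = (inner ℝ x y : ℝ) := by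
  have hcont : Continuous (fun v : EuclideanSpace ℝ (Fin d) => (inner ℝ v x : ℝ) * (inner ℝ v y : ℝ)) :=
    (continuous_id.inner continuous_const).mul (continuous_id.inner continuous_const)
  rw [rademacherMeasure, integral_map (measurable_signVec d).aemeasurable hcont.aestronglyMeasurable,
    PMF.integral_eq_sum]
  have hinner : ∀ (b : Fin d → Bool) (z : EuclideanSpace ℝ (Fin d)),
      (inner ℝ (signVec d b) z : ℝ) = ∑ i, (if b i then (1:ℝ) else -1) * z i := by
    intro b z
    simp [PiLp.inner_apply, RCLike.inner_apply, signVec]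
  have hxy : (inner ℝ x y : ℝ) = ∑ i, x i * y i := by
    simp [PiLp.inner_apply, RCLike.inner_apply]
    exact Finset.sum_congr rfl fun _ _ => mul_comm _ _
  have key : ∑ b : Fin d → Bool,
      ((∑ i, (if b i then (1:ℝ) else -1) * x i) * (∑ i, (if b i then (1:ℝ) else -1) * y i))
      = (2:ℝ)^d * ∑ i, x i * y i := by
    calc ∑ b : Fin d → Bool,
        ((∑ i, (if b i then (1:ℝ) else -1) * x i) * (∑ i, (if b i then (1:ℝ) else -1) * y i))
        = ∑ b : Fin d → Bool, ∑ i, ∑ i',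
            ((if b i then (1:ℝ) else -1) * (if b i' then (1:ℝ) else -1)) * (x i * y i') := by
          refine Finset.sum_congr rfl fun b _ => ?_
          rw [Finset.sum_mul_sum]
          exact Finset.sum_congr rfl fun i _ => Finset.sum_congr rfl fun i' _ => by ring
      _ = ∑ i, ∑ i', ∑ b : Fin d → Bool,
            ((if b i then (1:ℝ) else -1) * (if b i' then (1:ℝ) else -1)) * (x i * y i') := by
          rw [Finset.sum_comm]
          exact Finset.sum_congr rfl fun i _ => Finset.sum_comm
      _ = ∑ i, ∑ i', (if i = i' then (2:ℝ)^d else 0) * (x i * y i') := by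
          refine Finset.sum_congr rfl fun i _ => Finset.sum_congr rfl fun i' _ => ?_
          rw [← Finset.sum_mul, sign_pair_sum]
      _ = ∑ i, (2:ℝ)^d * (x i * y i) := by
          refine Finset.sum_congr rfl fun i _ => ?_
          simp
      _ = (2:ℝ)^d * ∑ i, x i * y i := by rw [Finset.mul_sum]
  simp only [PMF.uniformOfFintype_apply, smul_eq_mul]
  simp only [hinner]
  rw [← Finset.mul_sum, key, hxy]
  have hcard : ((Fintype.card (Fin d → Bool) : ENNReal))⁻¹.toReal = ((2:ℝ)^d)⁻¹ := by
    rw [Fintype.card_fun]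
    simp [ENNReal.toReal_inv]
  rw [hcard, ← mul_assoc, inv_mul_cancel₀ (by positivity), one_mul]

lemma rad_integrable {d : ℕ} {F : EuclideanSpace ℝ (Fin d) → ℝ}
    (hF : AEStronglyMeasurable F (rademacherMeasure d)) :
    Integrable F (rademacherMeasure d) := by
  rw [rademacherMeasure] at hF ⊢
  rw [integrable_map_measure hF (measurable_signVec d).aemeasurable]
  exact .of_finite

lemma rad_abs_integral {d : ℕ} (x y : EuclideanSpace ℝ (Fin d)) (hx : ‖x‖ ≤ 1) (hy : ‖y‖ ≤ 1) :
    ∫ v, |(inner ℝ v x : ℝ) * (inner ℝ v y : ℝ)| ∂(rademacherMeasure d) ≤ 1 := by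
  have hcx : Continuous (fun v : EuclideanSpace ℝ (Fin d) => (inner ℝ v x : ℝ)) :=
    continuous_id.inner continuous_const
  have hcy : Continuous (fun v : EuclideanSpace ℝ (Fin d) => (inner ℝ v y : ℝ)) :=
    continuous_id.inner continuous_const
  have int1 : Integrable (fun v => |(inner ℝ v x : ℝ) * (inner ℝ v y : ℝ)|) (rademacherMeasure d) :=
    rad_integrable ((hcx.mul hcy).abs.aestronglyMeasurable)
  have int2 : Integrable (fun v => ((inner ℝ v x : ℝ)^2 + (inner ℝ v y : ℝ)^2)/2)
      (rademacherMeasure d) :=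
    rad_integrable (((((hcx.mul hcx).add (hcy.mul hcy))).div_const 2).aestronglyMeasurable
      |>.congr (by filter_upwards with v; simp only [Pi.add_apply, Pi.pow_apply, Pi.mul_apply]; ring))
  have hle : ∫ v, |(inner ℝ v x : ℝ) * (inner ℝ v y : ℝ)| ∂(rademacherMeasure d)
      ≤ ∫ v, ((inner ℝ v x : ℝ)^2 + (inner ℝ v y : ℝ)^2)/2 ∂(rademacherMeasure d) := by
    refine integral_mono int1 int2 fun v => ?_
    have := sq_nonneg ((inner ℝ v x : ℝ) - (inner ℝ v y : ℝ))
    have := sq_nonneg ((inner ℝ v x : ℝ) + (inner ℝ v y : ℝ))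
    rw [abs_mul]
    cases abs_cases (inner ℝ v x : ℝ) <;> cases abs_cases (inner ℝ v y : ℝ) <;> nlinarith
  have hval : ∫ v, ((inner ℝ v x : ℝ)^2 + (inner ℝ v y : ℝ)^2)/2 ∂(rademacherMeasure d)
      = (‖x‖^2 + ‖y‖^2)/2 := by
    have ix : Integrable (fun v => (inner ℝ v x : ℝ) * (inner ℝ v x : ℝ)) (rademacherMeasure d) :=
      rad_integrable (hcx.mul hcx).aestronglyMeasurable
    have iy : Integrable (fun v => (inner ℝ v y : ℝ) * (inner ℝ v y : ℝ)) (rademacherMeasure d) :=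
      rad_integrable (hcy.mul hcy).aestronglyMeasurable
    have : (fun v : EuclideanSpace ℝ (Fin d) => ((inner ℝ v x : ℝ)^2 + (inner ℝ v y : ℝ)^2)/2)
        = fun v => ((inner ℝ v x : ℝ) * (inner ℝ v x : ℝ) + (inner ℝ v y : ℝ) * (inner ℝ v y : ℝ))/2 := by
      funext v; ring
    rw [this, integral_div, integral_add ix iy, rad_inner_integral x x, rad_inner_integral y y,
      real_inner_self_eq_norm_sq, real_inner_self_eq_norm_sq]
  refine hle.trans ?_
  rw [hval]
  nlinarith [norm_nonneg x, norm_nonneg y]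

lemma iIndepFun_congr_ae {Ω ι : Type*} [MeasurableSpace Ω] {μ : Measure Ω} {β : ι → Type*}
    [m : ∀ i, MeasurableSpace (β i)] {f f' : ∀ i, Ω → β i}
    (hindep : iIndepFun f μ) (h : ∀ i, f i =ᵐ[μ] f' i) : iIndepFun f' μ := by
  rw [iIndepFun_iff_measure_inter_preimage_eq_mul] at hindep ⊢
  intro S sets hsets
  have hae : ∀ᵐ s ∂μ, ∀ i ∈ S, f i s = f' i s :=
    (MeasureTheory.ae_ball_iff S.countable_toSet).2 fun i _ => h i
  have h1 : ∀ i ∈ S, μ (f' i ⁻¹' sets i) = μ (f i ⁻¹' sets i) := by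
    intro i hi
    refine measure_congr ?_
    rw [Filter.eventuallyEq_set]
    filter_upwards [h i] with s hs
    simp [Set.mem_preimage, hs]
  have h2 : μ (⋂ i ∈ S, f' i ⁻¹' sets i) = μ (⋂ i ∈ S, f i ⁻¹' sets i) := by
    refine measure_congr ?_
    rw [Filter.eventuallyEq_set]
    filter_upwards [hae] with s hs
    simp only [Set.mem_iInter, Set.mem_preimage]
    exact ⟨fun H i hi => (hs i hi) ▸ H i hi, fun H i hi => (hs i hi).symm ▸ H i hi⟩
  rw [h2, hindep S hsets]
  exact (Finset.prod_congr rfl h1).symm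

lemma indep_prod_integral {Ω : Type*} [MeasurableSpace Ω] {μ : Measure Ω}
    [IsProbabilityMeasure μ] (h : ℕ → Ω → ℝ) (hm : ∀ j, Measurable (h j))
    (hi : iIndepFun h μ) (hint : ∀ j, Integrable (h j) μ)
    (s : Finset ℕ) :
    Integrable (fun ω => ∏ j ∈ s, h j ω) μ ∧
      ∫ ω, ∏ j ∈ s, h j ω ∂μ = ∏ j ∈ s, ∫ ω, h j ω ∂μ := by
  induction s using Finset.cons_induction with
  | empty => simp
  | cons i s his ih =>
    have hfi : IndepFun (∏ j ∈ s, h j) (h i) μ :=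
      hi.indepFun_finsetProd_of_notMem hm his
    have hprodeq : (fun ω => ∏ j ∈ Finset.cons i s his, h j ω)
        = (∏ j ∈ s, h j) * h i := by
      funext ω
      rw [Finset.prod_cons, Pi.mul_apply, Finset.prod_apply, mul_comm]
    constructor
    · rw [hprodeq]
      exact hfi.integrable_mul (ih.1.congr (by filter_upwards with ω; simp [Finset.prod_apply]))
        (hint i)
    · rw [hprodeq, hfi.integral_mul_eq_mul_integral
        (ih.1.congr (by filter_upwards with ω; simp [Finset.prod_apply])).aestronglyMeasurable
        (hint i).aestronglyMeasurable]
      have : ∫ ω, (∏ j ∈ s, h j) ω ∂μ = ∏ j ∈ s, ∫ ω, h j ω ∂μ := by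
        rw [← ih.2]; congr 1; funext ω; simp [Finset.prod_apply]
      rw [this, Finset.prod_cons, mul_comm]

set_option maxHeartbeats 2000000 in
lemma single_feature {d : ℕ} {Ω : Type*} [MeasurableSpace Ω] (μ : Measure Ω)
    [IsProbabilityMeasure μ]
    (a : ℕ → ℝ) (ha : ∀ n, 0 ≤ a n) (hsum : Summable a)
    (N : Ω → ℕ) (hN : Measurable N)
    (hNdist : ∀ n, μ (N ⁻¹' {n}) = (2 : ENNReal)⁻¹ ^ (n + 1))
    (ω : ℕ → Ω → EuclideanSpace ℝ (Fin d))
    (hωindep : iIndepFun ω μ)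
    (hωdist : ∀ j, Measure.map (ω j) μ = rademacherMeasure d)
    (hNω : IndepFun N (fun s j => ω j s) μ)
    (x y : EuclideanSpace ℝ (Fin d)) (hx : ‖x‖ ≤ 1) (hy : ‖y‖ ≤ 1) :
    Integrable (fun s => (Real.sqrt (a (N s) * 2 ^ (N s + 1)) *
        ∏ j ∈ Finset.range (N s), (inner ℝ (ω j s) x : ℝ)) *
      (Real.sqrt (a (N s) * 2 ^ (N s + 1)) *
        ∏ j ∈ Finset.range (N s), (inner ℝ (ω j s) y : ℝ))) μ ∧
    ∫ s, (Real.sqrt (a (N s) * 2 ^ (N s + 1)) *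
        ∏ j ∈ Finset.range (N s), (inner ℝ (ω j s) x : ℝ)) *
      (Real.sqrt (a (N s) * 2 ^ (N s + 1)) *
        ∏ j ∈ Finset.range (N s), (inner ℝ (ω j s) y : ℝ)) ∂μ
      = ∑' n, a n * (inner ℝ x y : ℝ) ^ n := by
  classical
  -- measurable modifications of ω
  have hωae : ∀ j, AEMeasurable (ω j) μ := by
    intro j
    by_contra hcon
    have h0 := Measure.map_of_not_aemeasurable hcon
    rw [hωdist j] at h0
    exact IsProbabilityMeasure.ne_zero (rademacherMeasure d) h0
  set ω' : ℕ → Ω → EuclideanSpace ℝ (Fin d) := fun j => (hωae j).mk _ with hω'def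
  have hm : ∀ j, Measurable (ω' j) := fun j => (hωae j).measurable_mk
  have hae : ∀ j, ω j =ᵐ[μ] ω' j := fun j => (hωae j).ae_eq_mk
  have hωdist' : ∀ j, Measure.map (ω' j) μ = rademacherMeasure d := fun j => by
    rw [← Measure.map_congr (hae j), hωdist j]
  have hωindep' : iIndepFun ω' μ := iIndepFun_congr_ae hωindep hae
  have haeall : ∀ᵐ s ∂μ, ∀ j, ω j s = ω' j s := (ae_all_iff).2 hae
  have hNω' : IndepFun N (fun s j => ω' j s) μ := by
    refine hNω.congr (Filter.EventuallyEq.refl _ _) ?_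
    filter_upwards [haeall] with s hs
    funext j; exact hs j
  set c : ℝ := (inner ℝ x y : ℝ) with hc
  have hcx : Continuous (fun v : EuclideanSpace ℝ (Fin d) => (inner ℝ v x : ℝ)) :=
    continuous_id.inner continuous_const
  have hcy : Continuous (fun v : EuclideanSpace ℝ (Fin d) => (inner ℝ v y : ℝ)) :=
    continuous_id.inner continuous_const
  set h : ℕ → Ω → ℝ := fun j s => (inner ℝ (ω' j s) x : ℝ) * (inner ℝ (ω' j s) y : ℝ) with hhdef
  set habs : ℕ → Ω → ℝ := fun j s => |h j s| with habsdef
  have hhm : ∀ j, Measurable (h j) := fun j =>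
    (hcx.measurable.comp' (hm j)).mul (hcy.measurable.comp' (hm j))
  have hhabsm : ∀ j, Measurable (habs j) := fun j => (hhm j).abs
  have hhindep : iIndepFun h μ :=
    hωindep'.comp (fun _ v => (inner ℝ v x : ℝ) * (inner ℝ v y : ℝ))
      (fun _ => (hcx.mul hcy).measurable)
  have hhabsindep : iIndepFun habs μ :=
    hωindep'.comp (fun _ v => |(inner ℝ v x : ℝ) * (inner ℝ v y : ℝ)|)
      (fun _ => (hcx.mul hcy).abs.measurable)
  have hint : ∀ j, Integrable (h j) μ := by
    intro j
    have h1 : Integrable (fun v : EuclideanSpace ℝ (Fin d) =>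
        (inner ℝ v x : ℝ) * (inner ℝ v y : ℝ)) (rademacherMeasure d) :=
      rad_integrable (hcx.mul hcy).aestronglyMeasurable
    rw [← hωdist' j] at h1
    exact (integrable_map_measure (hcx.mul hcy).aestronglyMeasurable
      (hm j).aemeasurable).1 h1
  have hintabs : ∀ j, Integrable (habs j) μ := fun j => (hint j).abs
  have hinth : ∀ j, ∫ s, h j s ∂μ = c := by
    intro j
    have h1 : ∫ s, h j s ∂μ
        = ∫ v, (inner ℝ v x : ℝ) * (inner ℝ v y : ℝ) ∂(Measure.map (ω' j) μ) :=
      (integral_map (hm j).aemeasurable (hcx.mul hcy).aestronglyMeasurable).symm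
    rw [h1, hωdist' j, rad_inner_integral]
  have hinthabs : ∀ j, ∫ s, habs j s ∂μ ≤ 1 := by
    intro j
    have h1 : ∫ s, habs j s ∂μ
        = ∫ v, |(inner ℝ v x : ℝ) * (inner ℝ v y : ℝ)| ∂(Measure.map (ω' j) μ) :=
      (integral_map (hm j).aemeasurable (hcx.mul hcy).abs.aestronglyMeasurable).symm
    rw [h1, hωdist' j]
    exact rad_abs_integral x y hx hy
  -- per-n objects
  set A : ℕ → Set Ω := fun n => N ⁻¹' {n} with hAdef
  have hA : ∀ n, MeasurableSet (A n) := fun n => hN (measurableSet_singleton n)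
  set P : ℕ → Ω → ℝ := fun n s => ∏ j ∈ Finset.range n, h j s with hPdef
  set Pabs : ℕ → Ω → ℝ := fun n s => ∏ j ∈ Finset.range n, habs j s with hPabsdef
  set X : ℕ → Ω → ℝ := fun n => (A n).indicator (fun _ => 1) with hXdef
  set f : ℕ → Ω → ℝ := fun n s => X n s * (a n * 2 ^ (n + 1) * P n s) with hfdef
  have hPP : ∀ n, Integrable (fun s => ∏ j ∈ Finset.range n, h j s) μ ∧
      ∫ s, ∏ j ∈ Finset.range n, h j s ∂μ = ∏ j ∈ Finset.range n, ∫ s, h j s ∂μ :=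
    fun n => indep_prod_integral h hhm hhindep hint (Finset.range n)
  have hPPabs : ∀ n, Integrable (fun s => ∏ j ∈ Finset.range n, habs j s) μ ∧
      ∫ s, ∏ j ∈ Finset.range n, habs j s ∂μ = ∏ j ∈ Finset.range n, ∫ s, habs j s ∂μ :=
    fun n => indep_prod_integral habs hhabsm hhabsindep hintabs (Finset.range n)
  have hPmeas : ∀ n, Measurable (P n) :=
    fun n => Finset.measurable_prod _ (fun j _ => hhm j)
  have hPabsmeas : ∀ n, Measurable (Pabs n) :=
    fun n => Finset.measurable_prod _ (fun j _ => hhabsm j)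
  have hXmeas : ∀ n, Measurable (X n) := fun n => measurable_const.indicator (hA n)
  have hfmeas : ∀ n, Measurable (f n) :=
    fun n => (hXmeas n).mul (measurable_const.mul (hPmeas n))
  have hXeq : ∀ n, X n = (fun m : ℕ => if m = n then (1:ℝ) else 0) ∘ N := by
    intro n; funext s
    by_cases hs : N s = n
    · simp [hXdef, hAdef, Set.indicator_of_mem, hs, Set.mem_preimage]
    · simp [hXdef, hAdef, Set.indicator_of_notMem, hs, Set.mem_preimage]
  have hXY : ∀ n, IndepFun (X n) (fun s => a n * 2 ^ (n + 1) * P n s) μ := by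
    intro n
    have := hNω'.comp (φ := fun m : ℕ => if m = n then (1:ℝ) else 0)
      (ψ := fun w : ℕ → EuclideanSpace ℝ (Fin d) =>
        a n * 2 ^ (n + 1) * ∏ j ∈ Finset.range n, ((inner ℝ (w j) x : ℝ) * (inner ℝ (w j) y : ℝ)))
      (measurable_of_countable _)
      ((Finset.measurable_prod _ (fun j _ =>
        (hcx.measurable.comp' (measurable_pi_apply j)).mul
          (hcy.measurable.comp' (measurable_pi_apply j)))).const_mul _)
    rw [hXeq n]
    exact this
  have hXYabs : ∀ n, IndepFun (X n) (fun s => a n * 2 ^ (n + 1) * Pabs n s) μ := by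
    intro n
    have := hNω'.comp (φ := fun m : ℕ => if m = n then (1:ℝ) else 0)
      (ψ := fun w : ℕ → EuclideanSpace ℝ (Fin d) =>
        a n * 2 ^ (n + 1) * ∏ j ∈ Finset.range n, |(inner ℝ (w j) x : ℝ) * (inner ℝ (w j) y : ℝ)|)
      (measurable_of_countable _)
      ((Finset.measurable_prod _ (fun j _ =>
        ((hcx.measurable.comp' (measurable_pi_apply j)).mul
          (hcy.measurable.comp' (measurable_pi_apply j))).abs)).const_mul _)
    rw [hXeq n]
    exact this
  have hXint : ∀ n, ∫ s, X n s ∂μ = ((2:ℝ)⁻¹) ^ (n + 1) := by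
    intro n
    have : ∫ s, X n s ∂μ = (μ (A n)).toReal • (1:ℝ) := integral_indicator_const (1:ℝ) (hA n)
    rw [this, hAdef] at *
    rw [hNdist n] at *
    simp [ENNReal.toReal_pow, ENNReal.toReal_inv]
  have hpow : ∀ n : ℕ, ((2:ℝ)⁻¹) ^ (n + 1) * (2:ℝ) ^ (n + 1) = 1 := by
    intro n; rw [← mul_pow]; norm_num
  have hfint : ∀ n, Integrable (f n) μ := by
    intro n
    have hXint' : Integrable (X n) μ := (integrable_const (1:ℝ)).indicator (hA n)
    have hYint : Integrable (fun s => a n * 2 ^ (n + 1) * P n s) μ :=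
      (hPP n).1.const_mul _
    exact (hXY n).integrable_mul hXint' hYint
  have hfint_eq : ∀ n, ∫ s, f n s ∂μ = a n * c ^ n := by
    intro n
    have hsp : ∫ s, f n s ∂μ
        = (∫ s, X n s ∂μ) * ∫ s, a n * 2 ^ (n + 1) * P n s ∂μ :=
      (hXY n).integral_fun_mul_eq_mul_integral (hXmeas n).aestronglyMeasurable
        (measurable_const.mul (hPmeas n)).aestronglyMeasurable
    have hY : ∫ s, a n * 2 ^ (n + 1) * P n s ∂μ = a n * 2 ^ (n + 1) * c ^ n := by
      rw [integral_const_mul, (hPP n).2]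
      congr 1
      rw [Finset.prod_congr rfl (fun j _ => hinth j), Finset.prod_const, Finset.card_range]
    rw [hsp, hXint n, hY,
      show ((2:ℝ)⁻¹) ^ (n + 1) * (a n * 2 ^ (n + 1) * c ^ n)
        = (((2:ℝ)⁻¹) ^ (n + 1) * (2:ℝ) ^ (n + 1)) * (a n * c ^ n) from by ring,
      hpow n, one_mul]
  have hfnorm : ∀ n, ∫ s, ‖f n s‖ ∂μ ≤ a n := by
    intro n
    have heq : (fun s => ‖f n s‖) = fun s => X n s * (a n * 2 ^ (n + 1) * Pabs n s) := by
      funext s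
      rw [Real.norm_eq_abs, hfdef]
      simp only []
      rw [abs_mul, abs_mul, abs_mul]
      have hXabs : |X n s| = X n s := by
        by_cases hs : s ∈ A n
        · simp [hXdef, Set.indicator_of_mem hs]
        · simp [hXdef, Set.indicator_of_notMem hs]
      have hPabs' : |P n s| = Pabs n s := by
        rw [hPdef, hPabsdef]
        simp only []
        exact Finset.abs_prod _ _
      rw [hXabs, hPabs', abs_of_nonneg (ha n), abs_of_nonneg (by positivity : (0:ℝ) ≤ 2 ^ (n+1))]
    rw [heq]
    have hsp : ∫ s, X n s * (a n * 2 ^ (n + 1) * Pabs n s) ∂μ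
        = (∫ s, X n s ∂μ) * ∫ s, a n * 2 ^ (n + 1) * Pabs n s ∂μ :=
      (hXYabs n).integral_fun_mul_eq_mul_integral (hXmeas n).aestronglyMeasurable
        (measurable_const.mul (hPabsmeas n)).aestronglyMeasurable
    have hq0 : (0:ℝ) ≤ ∫ s, Pabs n s ∂μ := by
      refine integral_nonneg fun s => ?_
      exact Finset.prod_nonneg fun j _ => abs_nonneg _
    have hq1 : ∫ s, Pabs n s ∂μ ≤ 1 := by
      rw [hPabsdef]
      simp only []
      rw [(hPPabs n).2]
      exact Finset.prod_le_one (fun j _ => integral_nonneg fun s => abs_nonneg _)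
        (fun j _ => hinthabs j)
    rw [hsp, hXint n, integral_const_mul]
    calc ((2:ℝ)⁻¹) ^ (n + 1) * (a n * 2 ^ (n + 1) * ∫ s, Pabs n s ∂μ)
        ≤ ((2:ℝ)⁻¹) ^ (n + 1) * (a n * 2 ^ (n + 1) * 1) := by
          refine mul_le_mul_of_nonneg_left ?_ (by positivity)
          exact mul_le_mul_of_nonneg_left hq1 (mul_nonneg (ha n) (by positivity))
      _ = a n := by
          rw [mul_one, show ((2:ℝ)⁻¹) ^ (n + 1) * (a n * 2 ^ (n + 1))
            = (((2:ℝ)⁻¹) ^ (n + 1) * (2:ℝ) ^ (n + 1)) * a n from by ring, hpow n, one_mul]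
  set g' : Ω → ℝ := fun s => (Real.sqrt (a (N s) * 2 ^ (N s + 1)) *
      ∏ j ∈ Finset.range (N s), (inner ℝ (ω' j s) x : ℝ)) *
    (Real.sqrt (a (N s) * 2 ^ (N s + 1)) *
      ∏ j ∈ Finset.range (N s), (inner ℝ (ω' j s) y : ℝ)) with hg'def
  have hg'single : ∀ s, g' s = f (N s) s := by
    intro s
    have hXs : X (N s) s = 1 := by
      simp [hXdef, hAdef, Set.indicator_of_mem, Set.mem_preimage]
    have hA0 : 0 ≤ a (N s) * 2 ^ (N s + 1) := mul_nonneg (ha _) (by positivity)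
    rw [hfdef]
    simp only []
    rw [hXs, one_mul, hg'def]
    simp only []
    rw [mul_mul_mul_comm, Real.mul_self_sqrt hA0, ← Finset.prod_mul_distrib]
  have hg'tsum : ∀ s, g' s = ∑' n, f n s := by
    intro s
    rw [tsum_eq_single (N s) (fun n hn => by
      have hns : s ∉ A n := by
        rw [hAdef]
        simp only [Set.mem_preimage, Set.mem_singleton_iff]
        exact fun hc => hn hc.symm
      simp [hfdef, hXdef, Set.indicator_of_notMem hns])]
    exact hg'single s
  have hlint : ∀ n, ∫⁻ s, ‖f n s‖₊ ∂μ ≤ ENNReal.ofReal (a n) := by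
    intro n
    rw [show ∫⁻ s, (‖f n s‖₊ : ENNReal) ∂μ = ENNReal.ofReal (∫ s, ‖f n s‖ ∂μ) from
      (ofReal_integral_norm_eq_lintegral_enorm (hfint n)).symm]
    exact ENNReal.ofReal_le_ofReal (hfnorm n)
  have hsum' : ∑' n, ∫⁻ s, ‖f n s‖₊ ∂μ ≠ ⊤ := by
    refine ne_top_of_le_ne_top ?_ (ENNReal.tsum_le_tsum hlint)
    rw [← ENNReal.ofReal_tsum_of_nonneg ha hsum]
    exact ENNReal.ofReal_ne_top
  have hg'meas : Measurable g' := by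
    have hF : ∀ n : ℕ, Measurable (fun s : Ω =>
        (Real.sqrt (a n * 2 ^ (n + 1)) * ∏ j ∈ Finset.range n, (inner ℝ (ω' j s) x : ℝ)) *
        (Real.sqrt (a n * 2 ^ (n + 1)) * ∏ j ∈ Finset.range n, (inner ℝ (ω' j s) y : ℝ))) := by
      intro n
      exact ((measurable_const.mul (Finset.measurable_prod _ (fun j _ =>
          hcx.measurable.comp' (hm j)))).mul
        (measurable_const.mul (Finset.measurable_prod _ (fun j _ =>
          hcy.measurable.comp' (hm j)))))
    have hK : Measurable (fun p : Ω × ℕ =>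
        (Real.sqrt (a p.2 * 2 ^ (p.2 + 1)) * ∏ j ∈ Finset.range p.2, (inner ℝ (ω' j p.1) x : ℝ)) *
        (Real.sqrt (a p.2 * 2 ^ (p.2 + 1)) * ∏ j ∈ Finset.range p.2, (inner ℝ (ω' j p.1) y : ℝ))) :=
      measurable_from_prod_countable_left (fun n => by
        show Measurable (fun s : Ω =>
          (Real.sqrt (a n * 2 ^ (n + 1)) * ∏ j ∈ Finset.range n, (inner ℝ (ω' j s) x : ℝ)) *
          (Real.sqrt (a n * 2 ^ (n + 1)) * ∏ j ∈ Finset.range n, (inner ℝ (ω' j s) y : ℝ)))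
        exact hF n)
    have heq : g' = (fun p : Ω × ℕ =>
        (Real.sqrt (a p.2 * 2 ^ (p.2 + 1)) * ∏ j ∈ Finset.range p.2, (inner ℝ (ω' j p.1) x : ℝ)) *
        (Real.sqrt (a p.2 * 2 ^ (p.2 + 1)) * ∏ j ∈ Finset.range p.2, (inner ℝ (ω' j p.1) y : ℝ)))
          ∘ (fun s => (s, N s)) := rfl
    rw [heq]
    exact hK.comp (measurable_id.prodMk hN)
  have hg'int : Integrable g' μ := by
    refine ⟨hg'meas.aestronglyMeasurable, ?_⟩
    show (∫⁻ s, (‖g' s‖₊ : ENNReal) ∂μ) < ⊤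
    calc ∫⁻ s, (‖g' s‖₊ : ENNReal) ∂μ
        ≤ ∫⁻ s, ∑' n, (‖f n s‖₊ : ENNReal) ∂μ := by
          refine lintegral_mono fun s => ?_
          rw [hg'single s]
          exact ENNReal.le_tsum _
      _ = ∑' n, ∫⁻ s, ‖f n s‖₊ ∂μ :=
          lintegral_tsum (fun n => ((hfmeas n).nnnorm.coe_nnreal_ennreal).aemeasurable)
      _ < ⊤ := hsum'.lt_top
  have hg'val : ∫ s, g' s ∂μ = ∑' n, a n * c ^ n := by
    rw [show g' = fun s => ∑' n, f n s from funext hg'tsum,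
      integral_tsum (fun n => (hfmeas n).aestronglyMeasurable) hsum']
    exact tsum_congr hfint_eq
  have hgg' : (fun s => (Real.sqrt (a (N s) * 2 ^ (N s + 1)) *
      ∏ j ∈ Finset.range (N s), (inner ℝ (ω j s) x : ℝ)) *
    (Real.sqrt (a (N s) * 2 ^ (N s + 1)) *
      ∏ j ∈ Finset.range (N s), (inner ℝ (ω j s) y : ℝ))) =ᵐ[μ] g' := by
    filter_upwards [haeall] with s hs
    have e1 : ∏ j ∈ Finset.range (N s), (inner ℝ (ω j s) x : ℝ)
        = ∏ j ∈ Finset.range (N s), (inner ℝ (ω' j s) x : ℝ) :=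
      Finset.prod_congr rfl fun j _ => by rw [hs j]
    have e2 : ∏ j ∈ Finset.range (N s), (inner ℝ (ω j s) y : ℝ)
        = ∏ j ∈ Finset.range (N s), (inner ℝ (ω' j s) y : ℝ) :=
      Finset.prod_congr rfl fun j _ => by rw [hs j]
    rw [hg'def]
    simp only []
    rw [e1, e2]
  exact ⟨hg'int.congr hgg'.symm, by rw [integral_congr_ae hgg', hg'val]⟩

/-- Unbiasedness of the `D`-dimensional Random Maclaurin Feature map (with `p = 2`):
with `D` independent copies `φ t` of the single random Maclaurin feature, each built from its
own `N t` with `P[N t = n] = 2^{-(n+1)}` and its own i.i.d. Rademacher vectors `ω t j`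
independent of `N t`, and `Φ x = D^{-1/2} (φ 1 x, …, φ D x)`, one has, for `‖x‖₂ ≤ 1` and
`‖y‖₂ ≤ 1`, `E[Φ(x) ⬝ Φ(y)] = ∑ n, a n ⟨x, y⟩^n`. -/
theorem rmf_feature_map_unbiased
    (d D : ℕ) (hd : 0 < d) (hD : 0 < D)
    {Ω : Type*} [MeasurableSpace Ω] (μ : Measure Ω) [IsProbabilityMeasure μ]
    (a : ℕ → ℝ) (ha : ∀ n, 0 ≤ a n) (hsum : Summable a)
    (N : Fin D → Ω → ℕ) (hN : ∀ t, Measurable (N t))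
    (hNdist : ∀ t, ∀ n : ℕ, μ (N t ⁻¹' {n}) = (2 : ENNReal)⁻¹ ^ (n + 1))
    (ω : Fin D → ℕ → Ω → EuclideanSpace ℝ (Fin d))
    (hωindep : ∀ t, iIndepFun (ω t) μ)
    (hωdist : ∀ t j, Measure.map (ω t j) μ = rademacherMeasure d)
    (hNω : ∀ t, IndepFun (N t) (fun s j => ω t j s) μ)
    (hcopies : iIndepFun
      (fun t s => ((N t s, fun j => ω t j s) : ℕ × (ℕ → EuclideanSpace ℝ (Fin d)))) μ)
    (φ : Fin D → EuclideanSpace ℝ (Fin d) → Ω → ℝ)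
    (hφ : ∀ t x s, φ t x s =
      Real.sqrt (a (N t s) * 2 ^ (N t s + 1)) *
        ∏ j ∈ Finset.range (N t s), (inner ℝ (ω t j s) x : ℝ))
    (Φ : EuclideanSpace ℝ (Fin d) → Ω → EuclideanSpace ℝ (Fin D))
    (hΦ : ∀ x s t, Φ x s t = (Real.sqrt D)⁻¹ * φ t x s)
    (x y : EuclideanSpace ℝ (Fin d)) (hx : ‖x‖ ≤ 1) (hy : ‖y‖ ≤ 1) :
    ∫ s, (inner ℝ (Φ x s) (Φ y s) : ℝ) ∂μ = ∑' n : ℕ, a n * (inner ℝ x y : ℝ) ^ n := by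
  have key : ∀ t : Fin D,
      Integrable (fun s => φ t x s * φ t y s) μ ∧
      ∫ s, φ t x s * φ t y s ∂μ = ∑' n, a n * (inner ℝ x y : ℝ) ^ n := by
    intro t
    have hgt : (fun s => φ t x s * φ t y s)
        = fun s => (Real.sqrt (a (N t s) * 2 ^ (N t s + 1)) *
            ∏ j ∈ Finset.range (N t s), (inner ℝ (ω t j s) x : ℝ)) *
          (Real.sqrt (a (N t s) * 2 ^ (N t s + 1)) *
            ∏ j ∈ Finset.range (N t s), (inner ℝ (ω t j s) y : ℝ)) :=
      funext fun s => by rw [hφ t x s, hφ t y s]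
    have h := single_feature μ a ha hsum (N t) (hN t) (hNdist t) (ω t)
      (hωindep t) (hωdist t) (hNω t) x y hx hy
    rw [← hgt] at h
    exact h
  have hip : ∀ s, (inner ℝ (Φ x s) (Φ y s) : ℝ)
      = ∑ t : Fin D, ((D:ℝ))⁻¹ * (φ t x s * φ t y s) := by
    intro s
    rw [PiLp.inner_apply]
    refine Finset.sum_congr rfl fun t _ => ?_
    rw [RCLike.inner_apply, conj_trivial, hΦ x s t, hΦ y s t]
    rw [show (Real.sqrt D)⁻¹ * φ t y s * ((Real.sqrt D)⁻¹ * φ t x s)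
      = (Real.sqrt D * Real.sqrt D)⁻¹ * (φ t x s * φ t y s) from by
        rw [mul_inv]; ring]
    rw [Real.mul_self_sqrt (Nat.cast_nonneg D)]
  calc ∫ s, (inner ℝ (Φ x s) (Φ y s) : ℝ) ∂μ
      = ∫ s, ∑ t : Fin D, ((D:ℝ))⁻¹ * (φ t x s * φ t y s) ∂μ := by
        exact integral_congr_ae (Filter.Eventually.of_forall hip)
    _ = ∑ t : Fin D, ∫ s, ((D:ℝ))⁻¹ * (φ t x s * φ t y s) ∂μ :=
        integral_finset_sum _ (fun t _ => ((key t).1.const_mul _))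
    _ = ∑ t : Fin D, ((D:ℝ))⁻¹ * ∑' n, a n * (inner ℝ x y : ℝ) ^ n := by
        refine Finset.sum_congr rfl fun t _ => ?_
        rw [integral_const_mul, (key t).2]
    _ = ∑' n : ℕ, a n * (inner ℝ x y : ℝ) ^ n := by
        rw [Finset.sum_const, Finset.card_univ, Fintype.card_fin, nsmul_eq_mul,
          ← mul_assoc, mul_inv_cancel₀ (by exact_mod_cast hD.ne' : (D:ℝ) ≠ 0), one_mul]
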